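/- Let p be an odd prime, let A be a commutative ring in which p·1 = 0, let s ≥ 2, and let R = A[u, v]/(u^p + v², u^{p^s}). Given μ, c_0, …, c_{s−1} ∈ A, set u' = Σ_{i=0}^{s−1} c_i u^{p^i} and v' = μ·v in R. Then u'^p + v'² = 0 in R if and only if μ² = c_0^p and c_i^p = 0 for all 1 ≤ i ≤ s−2. -/

import Mathlib

open MvPolynomial

lemma aux_algebraMap_inj {S : Type*} [CommRing S] [Nontrivial S] {g : Polynomial S}
    (hg : g.Monic) (hdeg : 0 < g.natDegree) {z : S}
    (h : algebraMap S (AdjoinRoot g) z = 0) : z = 0 := by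
  have h1 : AdjoinRoot.mk g (Polynomial.C z) = 0 := by
    rwa [AdjoinRoot.algebraMap_eq] at h
  have h2 := AdjoinRoot.modByMonicHom_mk hg (Polynomial.C z)
  rw [h1, map_zero] at h2
  have h3 : (Polynomial.C z) %ₘ g = Polynomial.C z := by
    rw [Polynomial.modByMonic_eq_self_iff hg]
    calc (Polynomial.C z).degree ≤ 0 := Polynomial.degree_C_le
    _ < g.degree := by
        rw [Polynomial.degree_eq_natDegree hg.ne_zero]
        exact_mod_cast hdeg
  rw [h3] at h2
  exact Polynomial.C_eq_zero.mp h2.symm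

theorem statement7 {A : Type} [CommRing A] (p : ℕ) (hp : Nat.Prime p) (hodd : Odd p)
    (hpA : (p : A) = 0) (s : ℕ) (hs : 2 ≤ s) (μ : A) (c : ℕ → A)
    (I : Ideal (MvPolynomial (Fin 2) A))
    (hI : I = Ideal.span {X 0 ^ p + X 1 ^ 2, X 0 ^ p ^ s}) :
    (Ideal.Quotient.mk I (∑ i ∈ Finset.range s, C (c i) * X 0 ^ p ^ i)) ^ p +
        (Ideal.Quotient.mk I (C μ * X 1)) ^ 2 = 0 ↔
      (μ ^ 2 = c 0 ^ p ∧ ∀ i : ℕ, 1 ≤ i → i ≤ s - 2 → c i ^ p = 0) := by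
  subst hI
  rcases subsingleton_or_nontrivial A with hA | hA
  · haveI : Subsingleton (MvPolynomial (Fin 2) A) := by
      constructor; intro a b
      ext m
      exact Subsingleton.elim _ _
    haveI : Subsingleton (MvPolynomial (Fin 2) A ⧸
        Ideal.span ({X 0 ^ p + X 1 ^ 2, X 0 ^ p ^ s} : Set (MvPolynomial (Fin 2) A))) :=
      Ideal.Quotient.mk_surjective.subsingleton
    exact ⟨fun _ => ⟨Subsingleton.elim _ _, fun _ _ _ => Subsingleton.elim _ _⟩,
      fun _ => Subsingleton.elim _ _⟩
  haveI : Fact p.Prime := ⟨hp⟩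
  haveI : CharP A p := (CharP.charP_iff_prime_eq_zero hp).mpr hpA
  have hF : (∑ i ∈ Finset.range s, C (c i) * X 0 ^ p ^ i : MvPolynomial (Fin 2) A) ^ p
      = ∑ i ∈ Finset.range s, C (c i ^ p) * X 0 ^ p ^ (i + 1) := by
    rw [sum_pow_char]
    refine Finset.sum_congr rfl fun i _ => ?_
    rw [mul_pow, ← map_pow, ← pow_mul, ← pow_succ]
  have hG : (C μ * X 1 : MvPolynomial (Fin 2) A) ^ 2 = C (μ ^ 2) * X 1 ^ 2 := by
    rw [mul_pow, ← map_pow]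
  rw [← map_pow, ← map_pow, ← map_add, Ideal.Quotient.eq_zero_iff_mem, hF, hG]
  constructor
  · intro hmem
    set q := p ^ s with hq
    set S := AdjoinRoot ((Polynomial.X : Polynomial A) ^ q) with hS
    set x : S := AdjoinRoot.root _ with hx
    haveI : Nontrivial S := by
      refine nontrivial_of_ne 1 0 fun h01 => ?_
      have h1 : AdjoinRoot.mk ((Polynomial.X : Polynomial A) ^ q) 1 = 0 := by
        simpa using h01
      rw [AdjoinRoot.mk_eq_zero, Polynomial.X_pow_dvd_iff] at h1
      have := h1 0 (pow_pos hp.pos s)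
      simp at this
    set g : Polynomial S := Polynomial.X ^ 2 + Polynomial.C (x ^ p) with hg
    have hgmonic : g.Monic := Polynomial.monic_X_pow_add_C _ two_ne_zero
    set T := AdjoinRoot g with hT
    set y : T := AdjoinRoot.root g with hy
    set ψ : MvPolynomial (Fin 2) A →ₐ[A] T := aeval ![algebraMap S T x, y] with hψ
    have hcomp : ∀ a : A, algebraMap A T a = algebraMap S T (algebraMap A S a) := fun a => rfl
    have hxq : x ^ q = 0 := by
      have h := AdjoinRoot.mk_self (f := (Polynomial.X : Polynomial A) ^ q)
      rwa [map_pow, AdjoinRoot.mk_X] at h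
    have hy2 : y ^ 2 + algebraMap S T (x ^ p) = 0 := by
      have h := AdjoinRoot.eval₂_root g
      simp only [hg, Polynomial.eval₂_add, Polynomial.eval₂_X_pow, Polynomial.eval₂_C] at h
      exact h
    have hker : ∀ f ∈ Ideal.span ({X 0 ^ p + X 1 ^ 2, X 0 ^ q} : Set (MvPolynomial (Fin 2) A)),
        ψ f = 0 := by
      intro f hf
      have hle : Ideal.span ({X 0 ^ p + X 1 ^ 2, X 0 ^ q} : Set (MvPolynomial (Fin 2) A)) ≤
          RingHom.ker ψ.toRingHom := by
        rw [Ideal.span_le]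
        rintro f' hf'
        simp only [Set.mem_insert_iff, Set.mem_singleton_iff] at hf'
        rcases hf' with rfl | rfl
        · show ψ _ = 0
          rw [map_add, map_pow, map_pow, hψ]
          simp only [aeval_X, Matrix.cons_val_zero, Matrix.cons_val_one, Matrix.head_cons]
          rw [← map_pow]
          linear_combination hy2
        · show ψ _ = 0
          rw [map_pow, hψ]
          simp only [aeval_X, Matrix.cons_val_zero]
          rw [← map_pow, hxq, map_zero]
      exact hle hf
    have hψF := hker _ hmem
    have hy2' : y ^ 2 = - algebraMap S T (x ^ p) := eq_neg_of_add_eq_zero_left hy2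
    set P : Polynomial A := (∑ i ∈ Finset.range s, Polynomial.C (c i ^ p) *
        Polynomial.X ^ p ^ (i + 1)) - Polynomial.C (μ ^ 2) * Polynomial.X ^ p with hP
    have hdeg : 0 < g.natDegree := by
      rw [hg, Polynomial.natDegree_X_pow_add_C]
      norm_num
    have hmk0 : AdjoinRoot.mk ((Polynomial.X : Polynomial A) ^ q) P = 0 := by
      refine aux_algebraMap_inj hgmonic hdeg ?_
      rw [← hψF, hψ, hP]
      simp only [map_add, map_sub, map_sum, map_mul, map_pow, aeval_C, aeval_X,
        Matrix.cons_val_zero, Matrix.cons_val_one, Matrix.head_cons,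
        AdjoinRoot.mk_C, AdjoinRoot.mk_X]
      rw [hy2']
      simp only [← AdjoinRoot.algebraMap_eq, ← hcomp, map_pow, ← hx]
      simp only [hcomp]
      ring
    have hdvd := AdjoinRoot.mk_eq_zero.mp hmk0
    rw [Polynomial.X_pow_dvd_iff] at hdvd
    have hco : ∀ d, P.coeff d =
        (∑ i ∈ Finset.range s, if d = p ^ (i + 1) then c i ^ p else 0)
          - (if d = p then μ ^ 2 else 0) := by
      intro d
      rw [hP]
      simp only [Polynomial.coeff_sub, Polynomial.finset_sum_coeff, Polynomial.coeff_C_mul,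
        Polynomial.coeff_X_pow, mul_ite, mul_one, mul_zero]
    have hinj : ∀ i j : ℕ, p ^ (i + 1) = p ^ (j + 1) → i = j := fun i j h => by
      have := Nat.pow_right_injective hp.two_le h
      omega
    have hsum_eval : ∀ k, k < s →
        (∑ i ∈ Finset.range s, if p ^ (k + 1) = p ^ (i + 1) then c i ^ p else 0) = c k ^ p := by
      intro k hk
      rw [Finset.sum_eq_single k]
      · rw [if_pos rfl]
      · intro j _ hj
        rw [if_neg fun hcon => hj (hinj _ _ hcon).symm]
      · intro h
        exact absurd (Finset.mem_range.mpr hk) h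
    constructor
    · have h1 := hdvd p (by
        rw [hq]
        calc p = p ^ 1 := (pow_one p).symm
        _ < p ^ s := Nat.pow_lt_pow_right hp.one_lt (by omega))
      rw [hco] at h1
      have e1 : (∑ i ∈ Finset.range s, if p = p ^ (i + 1) then c i ^ p else 0) = c 0 ^ p := by
        have h := hsum_eval 0 (by omega)
        simpa [pow_one] using h
      rw [e1, if_pos rfl] at h1
      linear_combination -h1
    · intro i h1i his2
      have h2 := hdvd (p ^ (i + 1)) (by
        rw [hq]
        exact Nat.pow_lt_pow_right hp.one_lt (by omega))
      rw [hco, hsum_eval i (by omega), if_neg fun hcon => by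
        have h' : p ^ (i + 1) = p ^ (0 + 1) := by simpa [pow_one] using hcon
        have := hinj _ _ h'
        omega] at h2
      simpa using h2
  · rintro ⟨h0, hmid⟩
    rw [Ideal.mem_span_pair]
    refine ⟨C (μ ^ 2), C (c (s - 1) ^ p), ?_⟩
    have hsub : ({0, s - 1} : Finset ℕ) ⊆ Finset.range s := by
      intro i hi
      simp only [Finset.mem_insert, Finset.mem_singleton] at hi
      rcases hi with rfl | rfl <;> simp <;> omega
    have hsum : ∑ i ∈ Finset.range s, C (c i ^ p) * (X 0 : MvPolynomial (Fin 2) A) ^ p ^ (i + 1)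
        = C (μ ^ 2) * X 0 ^ p + C (c (s - 1) ^ p) * X 0 ^ p ^ s := by
      rw [← Finset.sum_subset hsub]
      · rw [Finset.sum_pair (by omega : (0 : ℕ) ≠ s - 1)]
        rw [show s - 1 + 1 = s by omega, zero_add, pow_one, h0]
      · intro i hi hni
        simp only [Finset.mem_insert, Finset.mem_singleton, not_or] at hni
        rw [hmid i (by omega) (by simp at hi; omega), map_zero, zero_mul]
    rw [hsum]; ring
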